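/- arXiv:2009.08973 — 3 statements merged into one kernel-verified Lean document; each statement's English description precedes it below -/
import Mathlib

section
/- Let M be a finite MDP with discount γ ∈ [0,1) and let π be a policy with action-value function Q^π. Define the greedy policy π_new by π_new(s) = δ_{a*(s)} where a*(s) ∈ argmax_a Q^π(s,a). Then for all (s,a), Q^{π_new}(s,a) ≥ Q^π(s,a). -/
open Finset

/-- Greedy (CEM) policy improvement: the deterministic policy choosing
`a*(s) ∈ argmax_a Q^π(s,a)` has Q-function dominating Q^π. -/
theorem greedy_policy_improvement
    {S A : Type*} [Fintype S] [Fintype A] [Nonempty S] [Nonempty A]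
    (P : S → A → S → ℝ) (hPpos : ∀ s a s', 0 ≤ P s a s')
    (hPsum : ∀ s a, ∑ s', P s a s' = 1)
    (r : S → A → ℝ) (γ : ℝ) (hγ0 : 0 ≤ γ) (hγ1 : γ < 1)
    (π : S → A → ℝ)
    (hπpos : ∀ s a, 0 ≤ π s a) (hπsum : ∀ s, ∑ a, π s a = 1)
    (Qπ Qnew : S → A → ℝ)
    (hBellπ : ∀ s a, Qπ s a =
      r s a + γ * ∑ s', P s a s' * ∑ a', π s' a' * Qπ s' a')
    (astar : S → A)
    (hgreedy : ∀ s a, Qπ s a ≤ Qπ s (astar s))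
    (hBellnew : ∀ s a, Qnew s a =
      r s a + γ * ∑ s', P s a s' * Qnew s' (astar s')) :
    ∀ s a, Qπ s a ≤ Qnew s a := by
  obtain ⟨p, -, hp⟩ := Finset.exists_min_image (univ : Finset (S × A))
    (fun p => Qnew p.1 p.2 - Qπ p.1 p.2) ⟨(Classical.arbitrary S, Classical.arbitrary A),
      mem_univ _⟩
  set m : ℝ := Qnew p.1 p.2 - Qπ p.1 p.2 with hm
  have hmin : ∀ s a, m ≤ Qnew s a - Qπ s a := fun s a => hp (s, a) (mem_univ _)
  -- value comparison at each successor state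
  have hV : ∀ s', ∑ a', π s' a' * Qπ s' a' ≤ Qπ s' (astar s') := by
    intro s'
    calc ∑ a', π s' a' * Qπ s' a'
        ≤ ∑ a', π s' a' * Qπ s' (astar s') := by
          apply Finset.sum_le_sum
          intro a' _
          exact mul_le_mul_of_nonneg_left (hgreedy s' a') (hπpos s' a')
      _ = Qπ s' (astar s') := by rw [← Finset.sum_mul, hπsum, one_mul]
  have key : γ * m ≤ m := by
    have hdiff : m = γ * ∑ s', P p.1 p.2 s' *
        (Qnew s' (astar s') - ∑ a', π s' a' * Qπ s' a') := by
      rw [hm, hBellnew p.1 p.2, hBellπ p.1 p.2, Finset.mul_sum, Finset.mul_sum,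
        Finset.mul_sum, add_sub_add_left_eq_sub, ← Finset.sum_sub_distrib]
      exact Finset.sum_congr rfl fun s' _ => by ring
    have hterm : ∀ s' : S, m ≤ Qnew s' (astar s') - ∑ a', π s' a' * Qπ s' a' := by
      intro s'
      calc m ≤ Qnew s' (astar s') - Qπ s' (astar s') := hmin s' (astar s')
        _ ≤ Qnew s' (astar s') - ∑ a', π s' a' * Qπ s' a' := by
            linarith [hV s']
    calc γ * m = γ * ∑ s', P p.1 p.2 s' * m := by
          rw [← Finset.sum_mul, hPsum, one_mul]
      _ ≤ γ * ∑ s', P p.1 p.2 s' *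
            (Qnew s' (astar s') - ∑ a', π s' a' * Qπ s' a') := by
          apply mul_le_mul_of_nonneg_left _ hγ0
          apply Finset.sum_le_sum
          intro s' _
          exact mul_le_mul_of_nonneg_left (hterm s') (hPpos p.1 p.2 s')
      _ = m := hdiff.symm
  have hm0 : 0 ≤ m := by nlinarith
  intro s a
  linarith [hmin s a]
end

section
/- Let γ ∈ [0,1) and let T be the optimal Bellman operator of a finite MDP. Suppose Q_{t+1}(s,a) = Q_t(s,a) + α_t(s,a)((TQ_t)(s,a) + c_t(s,a) − Q_t(s,a)) where ‖c_t‖_∞ → 0, each (s,a) satisfies α_t(s,a) ∈ [0,1], Σ_t α_t(s,a) = ∞, Σ_t α_t(s,a)² < ∞, and the updates are deterministic (no noise). Then Q_t converges to the unique fixed point Q* of T. -/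
open Finset Filter

private lemma aux_seq (x a : ℕ → ℝ) (ha : ∀ t, a t ∈ Set.Icc (0:ℝ) 1)
    (hdiv : Tendsto (fun n => ∑ t ∈ Finset.range n, a t) atTop atTop)
    (d : ℝ) (t0 : ℕ) (hrec : ∀ t, t0 ≤ t → x (t+1) ≤ (1 - a t) * x t + a t * d)
    {δ : ℝ} (hδ : 0 < δ) : ∀ᶠ t in atTop, x t ≤ d + δ := by
  set K := max (x t0 - d) 0 with hKdef
  have hK : 0 ≤ K := le_max_right _ _
  have hy : ∀ t, t0 ≤ t → x t - d ≤ K * ∏ k ∈ Finset.Ico t0 t, (1 - a k) := by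
    intro t ht
    induction t, ht using Nat.le_induction with
    | base => simp [hKdef, le_max_left]
    | succ t ht ih =>
      have h1 : 0 ≤ 1 - a t := by have := (ha t).2; linarith
      have h2 : x (t+1) - d ≤ (1 - a t) * (x t - d) := by
        have := hrec t ht; nlinarith [this]
      calc x (t+1) - d ≤ (1 - a t) * (x t - d) := h2
        _ ≤ (1 - a t) * (K * ∏ k ∈ Finset.Ico t0 t, (1 - a k)) :=
            mul_le_mul_of_nonneg_left ih h1
        _ = K * ∏ k ∈ Finset.Ico t0 (t+1), (1 - a k) := by
            rw [Finset.prod_Ico_succ_top ht]; ring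
  have hprod : Tendsto (fun t => ∏ k ∈ Finset.Ico t0 t, (1 - a k)) atTop (nhds 0) := by
    have hlb : ∀ t, 0 ≤ ∏ k ∈ Finset.Ico t0 t, (1 - a k) :=
      fun t => Finset.prod_nonneg (fun k _ => by have := (ha k).2; linarith)
    have hub : ∀ t, ∏ k ∈ Finset.Ico t0 t, (1 - a k)
        ≤ Real.exp (-(∑ k ∈ Finset.Ico t0 t, a k)) := by
      intro t
      calc ∏ k ∈ Finset.Ico t0 t, (1 - a k)
          ≤ ∏ k ∈ Finset.Ico t0 t, Real.exp (-(a k)) := by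
            apply Finset.prod_le_prod
            · intro k _; have := (ha k).2; linarith
            · intro k _; have h := Real.add_one_le_exp (-(a k)); linarith
        _ = Real.exp (∑ k ∈ Finset.Ico t0 t, -(a k)) := (Real.exp_sum _ _).symm
        _ = Real.exp (-(∑ k ∈ Finset.Ico t0 t, a k)) := by rw [Finset.sum_neg_distrib]
    have hS : Tendsto (fun t => ∑ k ∈ Finset.Ico t0 t, a k) atTop atTop := by
      apply Tendsto.congr' (f₁ := fun t => ∑ k ∈ Finset.range t, a k - ∑ k ∈ Finset.range t0, a k)
      · filter_upwards [eventually_ge_atTop t0] with t ht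
        exact (Finset.sum_Ico_eq_sub _ ht).symm
      · simpa [sub_eq_add_neg] using
          tendsto_atTop_add_const_right atTop (-(∑ k ∈ Finset.range t0, a k)) hdiv
    have hexp : Tendsto (fun t => Real.exp (-(∑ k ∈ Finset.Ico t0 t, a k))) atTop (nhds 0) :=
      Real.tendsto_exp_atBot.comp (tendsto_neg_atTop_atBot.comp hS)
    exact squeeze_zero hlb hub hexp
  have h0 : Tendsto (fun t => K * ∏ k ∈ Finset.Ico t0 t, (1 - a k)) atTop (nhds 0) := by
    simpa using hprod.const_mul K
  have hev : ∀ᶠ t in atTop, K * ∏ k ∈ Finset.Ico t0 t, (1 - a k) < δ :=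
    h0.eventually_lt_const hδ
  filter_upwards [hev, eventually_ge_atTop t0] with t h1 h2
  have := hy t h2; linarith

/-- Deterministic stochastic-approximation convergence: iterates driven by
the Bellman operator plus a vanishing correction converge to the fixed point. -/
theorem perturbed_q_iteration_converges
    {S A : Type*} [Fintype S] [Fintype A] [Nonempty S] [Nonempty A]
    (P : S → A → S → ℝ) (hPpos : ∀ s a s', 0 ≤ P s a s')
    (hPsum : ∀ s a, ∑ s', P s a s' = 1)
    (r : S → A → ℝ) (γ : ℝ) (hγ0 : 0 ≤ γ) (hγ1 : γ < 1)
    (T : (S → A → ℝ) → (S → A → ℝ))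
    (hT : ∀ Q s a, T Q s a =
      r s a + γ * ∑ s', P s a s' *
        (Finset.univ.sup' Finset.univ_nonempty fun a' => Q s' a'))
    (Qstar : S → A → ℝ) (hfix : T Qstar = Qstar)
    (Q : ℕ → S → A → ℝ) (α : ℕ → S → A → ℝ) (c : ℕ → S → A → ℝ)
    (hα01 : ∀ t s a, α t s a ∈ Set.Icc (0 : ℝ) 1)
    (hαdiv : ∀ s a, Tendsto (fun n => ∑ t ∈ Finset.range n, α t s a) atTop atTop)
    (hαsq : ∀ s a, Summable fun t => (α t s a) ^ 2)
    (hc : Tendsto (fun t => ⨆ p : S × A, |c t p.1 p.2|) atTop (nhds 0))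
    (hupd : ∀ t s a, Q (t + 1) s a =
      Q t s a + α t s a * (T (Q t) s a + c t s a - Q t s a)) :
    ∀ s a, Tendsto (fun t => Q t s a) atTop (nhds (Qstar s a)) := by
  -- sup norm of the error
  set M : ℕ → ℝ := fun t =>
    (Finset.univ : Finset (S × A)).sup' Finset.univ_nonempty
      (fun p => |Q t p.1 p.2 - Qstar p.1 p.2|) with hMdef
  have hle : ∀ t s a, |Q t s a - Qstar s a| ≤ M t := fun t s a =>
    Finset.le_sup' (f := fun p : S × A => |Q t p.1 p.2 - Qstar p.1 p.2|)
      (Finset.mem_univ (s, a))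
  have hMnn : ∀ t, 0 ≤ M t := by
    intro t
    obtain ⟨s, a⟩ : S × A := Classical.arbitrary _
    exact le_trans (abs_nonneg _) (hle t s a)
  -- the correction size
  set ε : ℕ → ℝ := fun t => ⨆ p : S × A, |c t p.1 p.2| with hεdef
  have hεle : ∀ t s a, |c t s a| ≤ ε t := by
    intro t s a
    exact le_ciSup (f := fun p : S × A => |c t p.1 p.2|)
      (Set.Finite.bddAbove (Set.finite_range _)) (s, a)
  have hεnn : ∀ t, 0 ≤ ε t := by
    intro t
    obtain ⟨s, a⟩ : S × A := Classical.arbitrary _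
    exact le_trans (abs_nonneg _) (hεle t s a)
  -- contraction property
  have hcontr : ∀ t s a, |T (Q t) s a - T Qstar s a| ≤ γ * M t := by
    intro t s a
    have key : ∀ s' : S,
        |(Finset.univ.sup' Finset.univ_nonempty fun a' => Q t s' a')
          - (Finset.univ.sup' Finset.univ_nonempty fun a' => Qstar s' a')| ≤ M t := by
      intro s'
      rw [abs_sub_le_iff]
      constructor
      · rw [sub_le_iff_le_add, add_comm]
        apply Finset.sup'_le
        intro a' _
        have h := abs_le.mp (hle t s' a')
        calc Q t s' a' ≤ Qstar s' a' + M t := by linarith [h.2]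
          _ ≤ (Finset.univ.sup' Finset.univ_nonempty fun a' => Qstar s' a') + M t :=
            add_le_add_left (Finset.le_sup' _ (Finset.mem_univ a')) _
      · rw [sub_le_iff_le_add, add_comm]
        apply Finset.sup'_le
        intro a' _
        have h := abs_le.mp (hle t s' a')
        calc Qstar s' a' ≤ Q t s' a' + M t := by linarith [h.1]
          _ ≤ (Finset.univ.sup' Finset.univ_nonempty fun a' => Q t s' a') + M t :=
            add_le_add_left (Finset.le_sup' _ (Finset.mem_univ a')) _
    rw [hT, hT]
    have heq : (r s a + γ * ∑ s', P s a s' *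
          (Finset.univ.sup' Finset.univ_nonempty fun a' => Q t s' a'))
        - (r s a + γ * ∑ s', P s a s' *
          (Finset.univ.sup' Finset.univ_nonempty fun a' => Qstar s' a'))
        = γ * ∑ s', P s a s' *
          ((Finset.univ.sup' Finset.univ_nonempty fun a' => Q t s' a')
            - (Finset.univ.sup' Finset.univ_nonempty fun a' => Qstar s' a')) := by
      simp only [mul_sub, Finset.sum_sub_distrib]
      ring
    rw [heq, abs_mul, abs_of_nonneg hγ0]
    apply mul_le_mul_of_nonneg_left _ hγ0
    calc |∑ s', P s a s' * _| ≤ ∑ s', |P s a s' *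
          ((Finset.univ.sup' Finset.univ_nonempty fun a' => Q t s' a')
            - (Finset.univ.sup' Finset.univ_nonempty fun a' => Qstar s' a'))| :=
        Finset.abs_sum_le_sum_abs _ _
      _ ≤ ∑ s', P s a s' * M t := by
        apply Finset.sum_le_sum
        intro s' _
        rw [abs_mul, abs_of_nonneg (hPpos s a s')]
        exact mul_le_mul_of_nonneg_left (key s') (hPpos s a s')
      _ = M t := by rw [← Finset.sum_mul, hPsum, one_mul]
  -- one-step recursion on the error
  have hrec : ∀ t s a, |Q (t+1) s a - Qstar s a|
      ≤ (1 - α t s a) * |Q t s a - Qstar s a| + α t s a * (γ * M t + ε t) := by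
    intro t s a
    have hQs : T Qstar s a = Qstar s a := by rw [hfix]
    have hα := hα01 t s a
    have hα0 : 0 ≤ α t s a := hα.1
    have hα1 : 0 ≤ 1 - α t s a := by linarith [hα.2]
    have hid : Q (t+1) s a - Qstar s a
        = (1 - α t s a) * (Q t s a - Qstar s a)
          + α t s a * ((T (Q t) s a - T Qstar s a) + c t s a) := by
      rw [hupd, hQs]; ring
    rw [hid]
    calc |(1 - α t s a) * (Q t s a - Qstar s a)
          + α t s a * ((T (Q t) s a - T Qstar s a) + c t s a)|
        ≤ |(1 - α t s a) * (Q t s a - Qstar s a)|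
          + |α t s a * ((T (Q t) s a - T Qstar s a) + c t s a)| := abs_add_le _ _
      _ = (1 - α t s a) * |Q t s a - Qstar s a|
          + α t s a * |(T (Q t) s a - T Qstar s a) + c t s a| := by
          rw [abs_mul, abs_mul, abs_of_nonneg hα0, abs_of_nonneg hα1]
      _ ≤ (1 - α t s a) * |Q t s a - Qstar s a| + α t s a * (γ * M t + ε t) := by
          apply add_le_add_right
          apply mul_le_mul_of_nonneg_left _ hα0
          calc |(T (Q t) s a - T Qstar s a) + c t s a|
              ≤ |T (Q t) s a - T Qstar s a| + |c t s a| := abs_add_le _ _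
            _ ≤ γ * M t + ε t := add_le_add (hcontr t s a) (hεle t s a)
  -- a uniform bound on ε
  obtain ⟨C, hC⟩ := hc.bddAbove_range
  have hC' : ∀ t, ε t ≤ C := fun t => hC (Set.mem_range_self t)
  have hC0 : 0 ≤ C := le_trans (hεnn 0) (hC' 0)
  -- uniform bound on M
  set B : ℝ := max (M 0) (C / (1 - γ)) with hBdef
  have hγ1' : 0 < 1 - γ := by linarith
  have hBC : C ≤ (1 - γ) * B := by
    have : C / (1 - γ) ≤ B := le_max_right _ _
    calc C = (1 - γ) * (C / (1 - γ)) := by field_simp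
      _ ≤ (1 - γ) * B := mul_le_mul_of_nonneg_left this (le_of_lt hγ1')
  have hB0 : 0 ≤ B := le_trans (hMnn 0) (le_max_left _ _)
  have hMB : ∀ t, M t ≤ B := by
    intro t
    induction t with
    | zero => exact le_max_left _ _
    | succ t ih =>
      apply Finset.sup'_le
      rintro ⟨s, a⟩ _
      have h1 := hrec t s a
      have h2 := hle t s a
      have hα := hα01 t s a
      have hε2 := hC' t
      have e1 : (1 - α t s a) * |Q t s a - Qstar s a| ≤ (1 - α t s a) * B :=
        mul_le_mul_of_nonneg_left (le_trans h2 ih) (by linarith [hα.2])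
      have e2 : γ * M t + ε t ≤ γ * B + C := by
        have := mul_le_mul_of_nonneg_left ih hγ0; linarith [hC' t]
      have e3 : α t s a * (γ * M t + ε t) ≤ α t s a * (γ * B + C) :=
        mul_le_mul_of_nonneg_left e2 hα.1
      have e4 : α t s a * (γ * B + C) ≤ α t s a * B := by
        apply mul_le_mul_of_nonneg_left _ hα.1; linarith [hBC]
      have e5 : (1 - α t s a) * B + α t s a * B = B := by ring
      linarith
  -- key improvement step
  have hstep : ∀ d : ℝ, 0 ≤ d → (∀ᶠ t in atTop, M t ≤ d) →
      ∀ δ : ℝ, 0 < δ → ∀ᶠ t in atTop, M t ≤ γ * d + δ := by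
    intro d hd hMd δ hδ
    have hεev : ∀ᶠ t in atTop, ε t ≤ δ / 2 := by
      have := hc.eventually_lt_const (show (0:ℝ) < δ / 2 by linarith)
      filter_upwards [this] with t ht
      exact le_of_lt ht
    obtain ⟨t0, ht0⟩ := (hMd.and hεev).exists_forall_of_atTop
    have hcoord : ∀ p : S × A, ∀ᶠ t in atTop,
        |Q t p.1 p.2 - Qstar p.1 p.2| ≤ (γ * d + δ / 2) + δ / 2 := by
      rintro ⟨s, a⟩
      apply aux_seq (fun t => |Q t s a - Qstar s a|) (fun t => α t s a)
        (fun t => hα01 t s a) (hαdiv s a) (γ * d + δ / 2) t0 _ (by linarith)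
      intro t ht
      obtain ⟨hMt, hεt⟩ := ht0 t ht
      have h1 := hrec t s a
      have hα := hα01 t s a
      have : γ * M t + ε t ≤ γ * d + δ / 2 := by
        have := mul_le_mul_of_nonneg_left hMt hγ0
        linarith
      nlinarith [hα.1, this]
    have hall : ∀ᶠ t in atTop, ∀ p : S × A,
        |Q t p.1 p.2 - Qstar p.1 p.2| ≤ (γ * d + δ / 2) + δ / 2 :=
      Filter.eventually_all.mpr hcoord
    filter_upwards [hall] with t ht
    have : M t ≤ (γ * d + δ / 2) + δ / 2 := Finset.sup'_le _ _ (fun p _ => ht p)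
    linarith
  -- conclude M → 0
  have hMev : ∀ e : ℝ, 0 < e → ∀ᶠ t in atTop, M t ≤ e := by
    intro e he
    set δ := (1 - γ) * e / 2 with hδdef
    have hδpos : 0 < δ := by positivity
    have hk : ∀ k : ℕ, ∀ᶠ t in atTop, M t ≤ γ ^ k * B + e / 2 := by
      intro k
      induction k with
      | zero =>
        apply Filter.Eventually.of_forall
        intro t
        have := hMB t
        simp only [pow_zero, one_mul]
        linarith
      | succ k ih =>
        have hd0 : 0 ≤ γ ^ k * B + e / 2 := by positivity
        have := hstep _ hd0 ih δ hδpos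
        filter_upwards [this] with t ht
        have : γ * (γ ^ k * B + e / 2) + δ = γ ^ (k+1) * B + (γ * e / 2 + δ) := by
          rw [pow_succ]; ring
        rw [this] at ht
        have hγe : γ * e / 2 + δ ≤ e / 2 := by rw [hδdef]; nlinarith
        linarith
    have hpow : Tendsto (fun k : ℕ => γ ^ k * B) atTop (nhds 0) := by
      simpa using (tendsto_pow_atTop_nhds_zero_of_lt_one hγ0 hγ1).mul_const B
    obtain ⟨k, hkle⟩ := (hpow.eventually_lt_const (show (0:ℝ) < e / 2 by linarith)).exists
    filter_upwards [hk k] with t ht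
    linarith
  have hM0 : Tendsto M atTop (nhds 0) := by
    rw [Metric.tendsto_atTop]
    intro e he
    obtain ⟨N, hN⟩ := (hMev (e/2) (by linarith)).exists_forall_of_atTop
    exact ⟨N, fun n hn => by
      rw [Real.dist_eq, sub_zero, abs_of_nonneg (hMnn n)]
      linarith [hN n hn]⟩
  intro s a
  have habs : Tendsto (fun t => |Q t s a - Qstar s a|) atTop (nhds 0) :=
    squeeze_zero (fun t => abs_nonneg _) (fun t => hle t s a) hM0
  have hsub : Tendsto (fun t => Q t s a - Qstar s a) atTop (nhds 0) := by
    rwa [tendsto_zero_iff_abs_tendsto_zero]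
  have := hsub.add_const (Qstar s a)
  simpa using this
end

section
/- Let π and π_new be policies in a finite MDP with γ ∈ [0,1) such that E_{a~π_new(s)} Q^π(s,a) ≥ V^π(s) for all s, with strict inequality at some state s₀ that is reachable. Then V^{π_new}(s₀) > V^π(s₀). -/
open Finset

/-- Strict policy improvement at a state where the improvement is strict. -/
theorem strict_policy_improvement
    {S A : Type*} [Fintype S] [Fintype A] [Nonempty S] [Nonempty A]
    (P : S → A → S → ℝ) (hPpos : ∀ s a s', 0 ≤ P s a s')
    (hPsum : ∀ s a, ∑ s', P s a s' = 1)
    (r : S → A → ℝ) (γ : ℝ) (hγ0 : 0 ≤ γ) (hγ1 : γ < 1)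
    (π πnew : S → A → ℝ)
    (hπpos : ∀ s a, 0 ≤ π s a) (hπsum : ∀ s, ∑ a, π s a = 1)
    (hπnpos : ∀ s a, 0 ≤ πnew s a) (hπnsum : ∀ s, ∑ a, πnew s a = 1)
    (Qπ Qnew : S → A → ℝ)
    (hBellπ : ∀ s a, Qπ s a =
      r s a + γ * ∑ s', P s a s' * ∑ a', π s' a' * Qπ s' a')
    (hBellnew : ∀ s a, Qnew s a =
      r s a + γ * ∑ s', P s a s' * ∑ a', πnew s' a' * Qnew s' a')
    (himprove : ∀ s, (∑ a, π s a * Qπ s a) ≤ ∑ a, πnew s a * Qπ s a)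
    (s₀ : S)
    (hstrict : (∑ a, π s₀ a * Qπ s₀ a) < ∑ a, πnew s₀ a * Qπ s₀ a) :
    (∑ a, π s₀ a * Qπ s₀ a) < ∑ a, πnew s₀ a * Qnew s₀ a := by
  have key : ∀ s a, Qπ s a ≤ Qnew s a := by
    by_contra h
    push_neg at h
    obtain ⟨s₁, a₁, h₁⟩ := h
    obtain ⟨⟨sm, am⟩, -, hmin⟩ := Finset.exists_min_image (Finset.univ : Finset (S × A))
      (fun p => Qnew p.1 p.2 - Qπ p.1 p.2) ⟨(s₁, a₁), Finset.mem_univ _⟩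
    set m := Qnew sm am - Qπ sm am with hm
    have hmneg : m < 0 := lt_of_le_of_lt (hmin (s₁, a₁) (Finset.mem_univ _)) (by linarith)
    have inner : ∀ s', m ≤ (∑ a', πnew s' a' * Qnew s' a') - (∑ a', π s' a' * Qπ s' a') := by
      intro s'
      have h3 : m ≤ (∑ a', πnew s' a' * Qnew s' a') - (∑ a', πnew s' a' * Qπ s' a') := by
        rw [← Finset.sum_sub_distrib]
        have : ∑ a', πnew s' a' * m ≤ ∑ a', (πnew s' a' * Qnew s' a' - πnew s' a' * Qπ s' a') := by
          apply Finset.sum_le_sum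
          intro a' _
          rw [← mul_sub]
          exact mul_le_mul_of_nonneg_left
            (by have := hmin (s', a') (Finset.mem_univ _); simpa using this)
            (hπnpos s' a')
        calc m = (∑ a', πnew s' a') * m := by rw [hπnsum s', one_mul]
          _ = ∑ a', πnew s' a' * m := by rw [Finset.sum_mul]
          _ ≤ _ := this
      linarith [himprove s']
    have eq1 : m = γ * ∑ s', P sm am s' *
        ((∑ a', πnew s' a' * Qnew s' a') - (∑ a', π s' a' * Qπ s' a')) := by
      rw [hm, hBellnew sm am, hBellπ sm am]
      rw [show ∀ x y z : ℝ, (x + γ * y) - (x + γ * z) = γ * (y - z) by intros; ring]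
      congr 1
      rw [← Finset.sum_sub_distrib]
      exact Finset.sum_congr rfl fun s' _ => (mul_sub _ _ _).symm
    have hsum : m ≤ ∑ s', P sm am s' *
        ((∑ a', πnew s' a' * Qnew s' a') - (∑ a', π s' a' * Qπ s' a')) := by
      calc m = (∑ s', P sm am s') * m := by rw [hPsum, one_mul]
        _ = ∑ s', P sm am s' * m := by rw [Finset.sum_mul]
        _ ≤ _ := Finset.sum_le_sum fun s' _ =>
            mul_le_mul_of_nonneg_left (inner s') (hPpos sm am s')
    have : γ * m ≤ m :=
      calc γ * m ≤ γ * ∑ s', P sm am s' *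
            ((∑ a', πnew s' a' * Qnew s' a') - (∑ a', π s' a' * Qπ s' a')) :=
            mul_le_mul_of_nonneg_left hsum hγ0
        _ = m := eq1.symm
    nlinarith
  have h2 : (∑ a, πnew s₀ a * Qπ s₀ a) ≤ ∑ a, πnew s₀ a * Qnew s₀ a :=
    Finset.sum_le_sum fun a _ => mul_le_mul_of_nonneg_left (key s₀ a) (hπnpos s₀ a)
  linarith
end
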